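/- For 0 < ε < 1/2, let u_ε(x) = −√ε (1 − x²)^{1/2 + ε} on (−1, 1). Then u_ε is convex with u_ε(±1) = 0 and its Monge–Ampère energy satisfies E(u_ε) = ∫_{−1}^{1} (−u_ε(x)) u_ε''(x) dx ≤ (1 + 2ε)² ≤ 4. -/

import Mathlib

open Set intervalIntegral

set_option maxHeartbeats 1000000 in
/-- For `0 < ε < 1/2`, `u_ε(x) = -√ε (1-x²)^{1/2+ε}` is convex on `[-1,1]`, vanishes at `±1`,
and its Monge–Ampère energy satisfies `∫ (-u_ε) u_ε'' dx ≤ (1+2ε)² ≤ 4`. -/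
theorem stmt_9 (ε : ℝ) (hε : ε ∈ Ioo (0:ℝ) (1/2)) (u : ℝ → ℝ)
    (hu : u = fun x : ℝ => -(Real.sqrt ε * (1 - x ^ 2) ^ ((1:ℝ)/2 + ε))) :
    ConvexOn ℝ (Icc (-1) 1) u ∧ u 1 = 0 ∧ u (-1) = 0 ∧
    (∫ x in (-1:ℝ)..1, (-u x) * deriv (deriv u) x) ≤ (1 + 2 * ε) ^ 2 ∧
    (1 + 2 * ε) ^ 2 ≤ 4 := by
  obtain ⟨hε0, hε2⟩ := hε
  have hε2' : 2 * ε < 1 := by linarith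
  set c := Real.sqrt ε with hc
  have hc0 : 0 ≤ c := Real.sqrt_nonneg ε
  have hc2 : c * c = ε := Real.mul_self_sqrt hε0.le
  set p : ℝ := 1/2 + ε with hp
  have hp0 : 0 < p := by rw [hp]; linarith
  have hg : ∀ x : ℝ, HasDerivAt (fun x : ℝ => 1 - x ^ 2) (-(2*x)) x := by
    intro x
    simpa using ((hasDerivAt_pow 2 x).const_sub 1)
  have hgpos : ∀ x ∈ Ioo (-1:ℝ) 1, (0:ℝ) < 1 - x ^ 2 := by
    intro x hx; nlinarith [hx.1, hx.2]
  set v : ℝ → ℝ := fun x => 2*c*p*(x*(1 - x^2)^(p-1)) with hv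
  have hderiv1 : ∀ x ∈ Ioo (-1:ℝ) 1, HasDerivAt u (v x) x := by
    intro x hx
    have h1 : HasDerivAt (fun x : ℝ => (1 - x^2) ^ p) (-(2*x) * p * (1-x^2)^(p-1)) x :=
      (hg x).rpow_const (Or.inl (hgpos x hx).ne')
    rw [hu]
    refine HasDerivAt.congr_deriv ((h1.const_mul c).neg) ?_
    simp [hv]; ring
  set w : ℝ → ℝ := fun x => 2*c*p*(1*(1 - x^2)^(p-1) + x*(-(2*x) * (p-1) * (1-x^2)^(p-1-1))) with hw
  have hderiv2 : ∀ x ∈ Ioo (-1:ℝ) 1, HasDerivAt v (w x) x := by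
    intro x hx
    have h1 : HasDerivAt (fun x : ℝ => (1 - x^2) ^ (p-1)) (-(2*x) * (p-1) * (1-x^2)^(p-1-1)) x :=
      (hg x).rpow_const (Or.inl (hgpos x hx).ne')
    have h2 := ((hasDerivAt_id x).mul h1).const_mul (2*c*p)
    refine HasDerivAt.congr_deriv h2 ?_
    rfl
  have hw2 : ∀ x ∈ Ioo (-1:ℝ) 1, w x = 2*c*p*((1-x^2)^(p-2) * (1 - 2*ε*x^2)) := by
    intro x hx
    have h := hgpos x hx
    have h1 : (1-x^2)^(p-1) = (1-x^2)^(p-2) * (1-x^2) := by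
      have := Real.rpow_add h (p-2) 1
      rw [Real.rpow_one] at this
      rw [show p - 1 = p - 2 + 1 by ring, this]
    have h2 : p - 1 - 1 = p - 2 := by ring
    rw [hw]
    simp only [h2, h1]
    rw [hp]
    ring
  have hderiv2' : ∀ x ∈ Ioo (-1:ℝ) 1, HasDerivAt (deriv u) (w x) x := by
    intro x hx
    have hev : v =ᶠ[nhds x] deriv u := by
      filter_upwards [isOpen_Ioo.mem_nhds hx] with y hy
      exact ((hderiv1 y hy).deriv).symm
    exact (hderiv2 x hx).congr_of_eventuallyEq hev.symm
  -- convexity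
  have hcont : ContinuousOn u (Icc (-1:ℝ) 1) := by
    rw [hu]
    apply Continuous.continuousOn
    apply Continuous.neg
    apply Continuous.mul continuous_const
    apply Continuous.rpow_const (by continuity)
    intro x
    exact Or.inr hp0.le
  have hconv : ConvexOn ℝ (Icc (-1:ℝ) 1) u := by
    apply convexOn_of_deriv2_nonneg (convex_Icc _ _) hcont
    · rw [interior_Icc]
      exact fun x hx => (hderiv1 x hx).differentiableAt.differentiableWithinAt
    · rw [interior_Icc]
      exact fun x hx => (hderiv2' x hx).differentiableAt.differentiableWithinAt
    · rw [interior_Icc]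
      intro x hx
      have : deriv^[2] u x = w x := by
        rw [show deriv^[2] u = deriv (deriv u) from rfl]
        exact (hderiv2' x hx).deriv
      rw [this, hw2 x hx]
      have h1 : (0:ℝ) ≤ (1-x^2)^(p-2) := Real.rpow_nonneg (hgpos x hx).le _
      have h2 : (0:ℝ) < 1 - 2*ε*x^2 := by nlinarith [hgpos x hx]
      positivity
  refine ⟨hconv, ?_, ?_, ?_, by nlinarith⟩
  · rw [hu]; norm_num [Real.zero_rpow hp0.ne']
  · rw [hu]; norm_num [Real.zero_rpow hp0.ne']
  -- the integral
  set F : ℝ → ℝ := fun x => ε*(1+2*ε)*((1-x^2)^(2*ε-1) * (1 - 2*ε*x^2)) with hF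
  have hFeq : ∀ x ∈ Ioo (-1:ℝ) 1, (-u x) * deriv (deriv u) x = F x := by
    intro x hx
    have h := hgpos x hx
    rw [(hderiv2' x hx).deriv, hw2 x hx, hu]
    have h1 : (1-x^2)^p * (1-x^2)^(p-2) = (1-x^2)^(2*ε-1) := by
      rw [← Real.rpow_add h, show p + (p-2) = 2*ε-1 by rw [hp]; ring]
    simp only [hF, neg_neg]
    calc Real.sqrt ε * (1 - x ^ 2) ^ ((1:ℝ)/2 + ε) * (2*c*p*((1-x^2)^(p-2) * (1 - 2*ε*x^2)))
        = (c * c) * (2*p) * (((1-x^2)^p * (1-x^2)^(p-2)) * (1 - 2*ε*x^2)) := by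
          rw [← hc, ← hp]; ring
      _ = ε*(1+2*ε)*((1-x^2)^(2*ε-1) * (1 - 2*ε*x^2)) := by
          rw [hc2, h1, hp]; ring
  have hae : ∀ᵐ x : ℝ, x ∈ Set.uIoc (-1:ℝ) 1 → (-u x) * deriv (deriv u) x = F x := by
    have h1 : ∀ᵐ x : ℝ, x ≠ (1:ℝ) := by
      simp only [MeasureTheory.ae_iff, not_not, setOf_eq_eq_singleton]
      exact MeasureTheory.measure_singleton 1
    filter_upwards [h1] with x hx1 hx
    rw [uIoc_of_le (by norm_num : (-1:ℝ) ≤ 1)] at hx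
    exact hFeq x ⟨hx.1, lt_of_le_of_ne hx.2 hx1⟩
  rw [intervalIntegral.integral_congr_ae hae]
  by_cases hI : IntervalIntegrable F MeasureTheory.volume (-1) 1
  swap
  · rw [intervalIntegral.integral_undef hI]; positivity
  -- majorant
  set G : ℝ → ℝ := fun x => ε*(1+2*ε)*(1-2*ε)*(1-x)^(2*ε-1)
      + ε*(1+2*ε)*(1-2*ε)*(1+x)^(2*ε-1) + ε*(1+2*ε)*(2*ε) with hG
  have hr1 : (-1:ℝ) < 2*ε - 1 := by linarith
  have hint1 : IntervalIntegrable (fun x : ℝ => (1-x)^(2*ε-1)) MeasureTheory.volume (-1) 1 := by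
    have h := (intervalIntegrable_rpow' (a := 0) (b := 2) hr1).comp_sub_left 1
    simp only [show (1:ℝ)-0=1 by norm_num, show (1:ℝ)-2=-1 by norm_num] at h
    exact h.symm
  have hint2 : IntervalIntegrable (fun x : ℝ => (1+x)^(2*ε-1)) MeasureTheory.volume (-1) 1 := by
    have h := (intervalIntegrable_rpow' (a := 0) (b := 2) hr1).comp_add_left 1
    simp only [show (0:ℝ)-1=-1 by norm_num, show (2:ℝ)-1=1 by norm_num] at h
    exact h
  have hGint : IntervalIntegrable G MeasureTheory.volume (-1) 1 := by
    apply IntervalIntegrable.add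
    apply IntervalIntegrable.add
    · exact hint1.const_mul _
    · exact hint2.const_mul _
    · exact intervalIntegrable_const
  have hle : ∀ x ∈ Icc (-1:ℝ) 1, F x ≤ G x := by
    intro x hx
    have hx1 : (0:ℝ) ≤ 1 - x := by linarith [hx.2]
    have hx2 : (0:ℝ) ≤ 1 + x := by linarith [hx.1]
    have ha1 : (0:ℝ) ≤ (1-x)^(2*ε-1) := Real.rpow_nonneg hx1 _
    have ha2 : (0:ℝ) ≤ (1+x)^(2*ε-1) := Real.rpow_nonneg hx2 _
    rcases eq_or_lt_of_le (by nlinarith : x^2 ≤ 1) with h2 | h2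
    · have : (1:ℝ) - x^2 = 0 := by linarith
      rw [hF]
      simp only [this, Real.zero_rpow (by linarith : 2*ε-1 ≠ 0), zero_mul, mul_zero]
      have hk : (0:ℝ) < ε*(1+2*ε)*(1-2*ε) :=
        mul_pos (mul_pos hε0 (by linarith)) (by linarith)
      have hk2 : (0:ℝ) < ε*(1+2*ε)*(2*ε) :=
        mul_pos (mul_pos hε0 (by linarith)) (by linarith)
      rw [hG]
      beta_reduce
      nlinarith [mul_nonneg hk.le ha1, mul_nonneg hk.le ha2]
    · have hgp : (0:ℝ) < 1 - x^2 := by linarith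
      have hsplit : F x = ε*(1+2*ε)*(1-2*ε)*(1-x^2)^(2*ε-1) + ε*(1+2*ε)*(2*ε)*(1-x^2)^(2*ε) := by
        have h1 : (1-x^2)^(2*ε) = (1-x^2)^(2*ε-1) * (1-x^2) := by
          have := Real.rpow_add hgp (2*ε-1) 1
          rw [Real.rpow_one] at this
          rw [← this]
          congr 1
          ring
        rw [hF, h1]; ring
      have hprod : (1-x^2)^(2*ε-1) = (1-x)^(2*ε-1) * (1+x)^(2*ε-1) := by
        rw [show (1:ℝ)-x^2 = (1-x)*(1+x) by ring, Real.mul_rpow hx1 hx2]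
      have hb : (1-x^2)^(2*ε-1) ≤ (1-x)^(2*ε-1) + (1+x)^(2*ε-1) := by
        rcases le_total 0 x with hx0 | hx0
        · have : (1+x)^(2*ε-1) ≤ 1 :=
            Real.rpow_le_one_of_one_le_of_nonpos (by linarith) (by linarith)
          rw [hprod]; nlinarith [mul_le_mul_of_nonneg_left this ha1]
        · have : (1-x)^(2*ε-1) ≤ 1 :=
            Real.rpow_le_one_of_one_le_of_nonpos (by linarith) (by linarith)
          rw [hprod]; nlinarith [mul_le_mul_of_nonneg_right this ha2]
      have hc1 : (1-x^2)^(2*ε) ≤ 1 := Real.rpow_le_one hgp.le (by nlinarith) (by linarith)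
      have hk1 : (0:ℝ) ≤ ε*(1+2*ε)*(1-2*ε) :=
        le_of_lt (mul_pos (mul_pos hε0 (by linarith)) (by linarith))
      have hk2 : (0:ℝ) ≤ ε*(1+2*ε)*(2*ε) :=
        le_of_lt (mul_pos (mul_pos hε0 (by linarith)) (by linarith))
      rw [hsplit, hG]
      beta_reduce
      nlinarith [mul_le_mul_of_nonneg_left hb hk1, mul_le_mul_of_nonneg_left hc1 hk2]
  have hmono := intervalIntegral.integral_mono_on (by norm_num : (-1:ℝ) ≤ 1) hI hGint hle
  refine hmono.trans ?_
  -- compute ∫ G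
  have hI1 : (∫ x in (-1:ℝ)..1, (1-x)^(2*ε-1)) = (2:ℝ)^(2*ε) / (2*ε) := by
    have h := intervalIntegral.integral_comp_sub_left (a := -1) (b := 1)
      (fun y : ℝ => y ^ (2*ε-1)) 1
    norm_num at h
    rw [show (∫ x in (-1:ℝ)..1, (1-x)^(2*ε-1)) = ∫ x in (-1:ℝ)..1, (fun y : ℝ => y ^ (2*ε-1)) (1 - x) from rfl, h,
      integral_rpow (Or.inl hr1)]
    rw [show 2*ε - 1 + 1 = 2*ε by ring, Real.zero_rpow (by linarith : 2*ε ≠ 0)]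
    ring
  have hI2 : (∫ x in (-1:ℝ)..1, (1+x)^(2*ε-1)) = (2:ℝ)^(2*ε) / (2*ε) := by
    have h := intervalIntegral.integral_comp_add_left (a := -1) (b := 1)
      (fun y : ℝ => y ^ (2*ε-1)) 1
    norm_num at h
    rw [show (∫ x in (-1:ℝ)..1, (1+x)^(2*ε-1)) = ∫ x in (-1:ℝ)..1, (fun y : ℝ => y ^ (2*ε-1)) (1 + x) from rfl, h,
      integral_rpow (Or.inl hr1)]
    rw [show 2*ε - 1 + 1 = 2*ε by ring, Real.zero_rpow (by linarith : 2*ε ≠ 0)]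
    ring
  have hGval : (∫ x in (-1:ℝ)..1, G x)
      = ε*(1+2*ε)*(1-2*ε)*((2:ℝ)^(2*ε)/(2*ε)) * 2 + ε*(1+2*ε)*(2*ε)*2 := by
    rw [hG]
    rw [intervalIntegral.integral_add (((hint1.const_mul _).add (hint2.const_mul _))) intervalIntegrable_const,
      intervalIntegral.integral_add (hint1.const_mul _) (hint2.const_mul _),
      intervalIntegral.integral_const_mul, intervalIntegral.integral_const_mul,
      intervalIntegral.integral_const, hI1, hI2]
    simp
    ring
  rw [hGval]
  have hber : (2:ℝ)^(2*ε) ≤ 1 + 2*ε := by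
    have h := rpow_one_add_le_one_add_mul_self (s := 1) (by norm_num) (p := 2*ε)
      (by linarith) (by linarith)
    norm_num at h
    linarith [h]
  have h2pos : (0:ℝ) < (2:ℝ)^(2*ε) := Real.rpow_pos_of_pos (by norm_num) _
  have key : ε*(1+2*ε)*(1-2*ε)*((2:ℝ)^(2*ε)/(2*ε)) * 2 = (1+2*ε)*(1-2*ε)*(2:ℝ)^(2*ε) := by
    field_simp
  rw [key]
  nlinarith [mul_le_mul_of_nonneg_left hber (by nlinarith : (0:ℝ) ≤ (1+2*ε)*(1-2*ε))]
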